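/- arXiv:2008.00284 — 4 statements merged into one kernel-verified Lean document; each statement's English description precedes it below -/
import Mathlib

section
/- For all positive integers n, p and nonnegative integers q: S_p^{(q)}(n) = sum_{j=1}^p (-1)^{p+j} * S(p,j) * binomial(n+q+j, q+j+1) * j!, where S(p,j) is the Stirling number of the second kind. -/
open Finset

/-- `harmonic m` is the `m`-th harmonic number `H_m = ∑_{k=1}^m 1/k`. -/
def harmonic' (m : ℕ) : ℚ := ∑ k ∈ Finset.range m, 1/(k+1 : ℚ)

/-- Hyperharmonic numbers: `hyperh r n = h_n^{(r)}` with `h_n^{(0)} = 1/n`. -/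
def hyperh : ℕ → ℕ → ℚ
  | 0, n => if n = 0 then 0 else 1/(n:ℚ)
  | r+1, n => ∑ k ∈ Finset.Icc 1 n, hyperh r k

/-- Generalized hyperharmonic numbers: `GH p r n = H_n^{(p,r)}` with `H_k^{(p,0)} = 1/k^p`. -/
def GH (p : ℤ) : ℕ → ℕ → ℚ
  | 0, n => if n = 0 then 0 else (n:ℚ)^(-p)
  | r+1, n => ∑ k ∈ Finset.Icc 1 n, GH p r k

/-- Generalized harmonic numbers `H_m^{(p)} = ∑_{j=1}^m 1/j^p`. -/
def genH (p m : ℕ) : ℚ := ∑ j ∈ Finset.Icc 1 m, 1/(j:ℚ)^p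

/-- Hyper-sums: `hS p q n = S_p^{(q)}(n)` with `S_p^{(0)}(n) = ∑_{k=1}^n k^p`. -/
def hS (p : ℕ) : ℕ → ℕ → ℕ
  | 0, n => ∑ k ∈ Finset.Icc 1 n, k^p
  | q+1, n => ∑ k ∈ Finset.Icc 1 n, hS p q k

/-- Stirling numbers of the second kind. -/
def stirling2 : ℕ → ℕ → ℕ
  | 0, 0 => 1
  | 0, _+1 => 0
  | _+1, 0 => 0
  | n+1, k+1 => (k+1) * stirling2 n (k+1) + stirling2 n k

/-- `r`-Stirling numbers of the second kind: `rstirling2 r n k = {n+r, k+r}_r`. -/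
def rstirling2 (r : ℕ) : ℕ → ℕ → ℕ
  | 0, 0 => 1
  | 0, _+1 => 0
  | n+1, 0 => r * rstirling2 r n 0
  | n+1, k+1 => (k+1+r) * rstirling2 r n (k+1) + rstirling2 r n k

/-- `r`-Stirling numbers of the first kind: `rstirling1 r n k = [n+r, k+r]_r`.
In particular `rstirling1 0 n k` is the unsigned Stirling number of the first kind. -/
def rstirling1 (r : ℕ) : ℕ → ℕ → ℕ
  | 0, 0 => 1
  | 0, _+1 => 0
  | n+1, 0 => (n+r) * rstirling1 r n 0
  | n+1, k+1 => (n+r) * rstirling1 r n (k+1) + rstirling1 r n k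

/-- Binomial coefficient with (possibly negative) integer upper argument. -/
def binomZ (x : ℤ) (k : ℕ) : ℚ :=
  (∏ i ∈ Finset.range k, ((x:ℚ) - i)) / (Nat.factorial k)

/-- Congruence of rationals mod `m`: `x ≡ y (mod m)` iff `m ∣ (x.num * y.den - y.num * x.den)`. -/
def ratMod (m : ℕ) (x y : ℚ) : Prop := (m:ℤ) ∣ (x.num * (y.den:ℤ) - y.num * (x.den:ℤ))

/-- Poly-Bernoulli numbers of negative index: `polyBN p n = B_n^{(-p)}`. -/
def polyBN (p n : ℕ) : ℤ :=
  (-1)^n * ∑ m ∈ Finset.range (n+1),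
    (stirling2 n m : ℤ) * (-1)^m * (Nat.factorial m : ℤ) * ((m:ℤ)+1)^p

/-- Poly-Bernoulli polynomial values of negative index: `polyBP p n q = B_n^{(-p)}(q)`. -/
def polyBP (p n q : ℕ) : ℤ :=
  ∑ j ∈ Finset.range (n+1), (n.choose j : ℤ) * polyBN p j * (q:ℤ)^(n-j)

lemma stirling2_eq_zero : ∀ p j, p < j → stirling2 p j = 0 := by
  intro p
  induction p with
  | zero => intro j hj
            match j, hj with
            | k+1, _ => rfl
  | succ p ih =>
    intro j hj
    match j, hj with
    | k+1, hj => simp only [stirling2, ih (k+1) (by omega), ih k (by omega)]; ring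

lemma key_poly (p : ℕ) (x : ℤ) :
    x ^ p = ∑ j ∈ range (p+1), (-1:ℤ)^(p+j) * stirling2 p j * ∏ i ∈ range j, (x + i) := by
  induction p with
  | zero => simp [stirling2]
  | succ p ih =>
    set P : ℕ → ℤ := fun j => ∏ i ∈ range j, (x + i) with hP
    have hmul : ∀ j : ℕ, x * P j = P (j+1) - j * P j := by
      intro j
      simp only [hP, Finset.prod_range_succ]
      ring
    set A : ℕ → ℤ := fun j => (-1:ℤ)^(p+j) * stirling2 p j * P (j+1) with hA
    set B : ℕ → ℤ := fun j => (-1:ℤ)^(p+j) * j * stirling2 p j * P j with hB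
    set D : ℕ → ℤ := fun j => (-1:ℤ)^(p+j) * ((j:ℤ)+1) * stirling2 p (j+1) * P (j+1) with hD
    have step : x ^ (p+1) = ∑ j ∈ range (p+1), (A j - B j) := by
      calc x ^ (p+1) = x * x ^ p := by ring
        _ = ∑ j ∈ range (p+1), (-1:ℤ)^(p+j) * stirling2 p j * (x * P j) := by
              rw [ih, Finset.mul_sum]; exact Finset.sum_congr rfl fun j _ => by ring
        _ = _ := Finset.sum_congr rfl fun j _ => by rw [hmul j]; simp only [hA, hB]; ring
    have hsign : ∀ a : ℕ, (-1:ℤ)^(a+2) = (-1)^a := fun a => by rw [pow_add]; ring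
    have hrec : ∀ j : ℕ, (stirling2 (p+1) (j+1) : ℤ) = ((j:ℤ)+1) * stirling2 p (j+1) + stirling2 p j := by
      intro j; simp only [stirling2]; push_cast; ring
    have hC : ∑ j ∈ range (p+1+1), (-1:ℤ)^(p+1+j) * stirling2 (p+1) j * P j
        = ∑ j ∈ range (p+1), (A j + D j) := by
      rw [Finset.sum_range_succ' (fun j => (-1:ℤ)^(p+1+j) * stirling2 (p+1) j * P j) (p+1)]
      have h0 : (stirling2 (p+1) 0 : ℤ) = 0 := by norm_num [stirling2]
      rw [h0]
      simp only [mul_zero, zero_mul, add_zero]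
      apply Finset.sum_congr rfl
      intro j _
      have : p+1+(j+1) = p+j+2 := by ring
      rw [this, hsign (p+j), hrec j]
      simp only [hA, hD]
      ring
    have hBD : ∑ j ∈ range (p+1), B j = - ∑ j ∈ range (p+1), D j := by
      rw [Finset.sum_range_succ' B p, Finset.sum_range_succ D p]
      have hB0 : B 0 = 0 := by simp [hB]
      have hDp : D p = 0 := by
        simp only [hD, stirling2_eq_zero p (p+1) (by omega)]
        push_cast; ring
      rw [hB0, hDp, add_zero, add_zero, ← Finset.sum_neg_distrib]
      apply Finset.sum_congr rfl
      intro j _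
      simp only [hB, hD]
      rw [show p+(j+1) = (p+j)+1 by ring, pow_succ]
      push_cast
      ring
    rw [step, Finset.sum_sub_distrib, hC, Finset.sum_add_distrib, hBD]
    ring

lemma prod_eq_choose (n j : ℕ) :
    (∏ i ∈ range j, ((n:ℤ)+1+i)) = ((n+j).choose j : ℤ) * (Nat.factorial j : ℤ) := by
  have h1 : (∏ i ∈ range j, ((n:ℤ)+1+i)) * (Nat.factorial n : ℤ) = (Nat.factorial (n+j) : ℤ) := by
    induction j with
    | zero => simp
    | succ j ih =>
      rw [Finset.prod_range_succ, mul_right_comm, ih, show n+(j+1) = (n+j)+1 by ring,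
        Nat.factorial_succ]
      push_cast
      ring
  have h2 : ((n+j).choose j) * (Nat.factorial j) * (Nat.factorial n) = Nat.factorial (n+j) := by
    have := Nat.choose_mul_factorial_mul_factorial (show j ≤ n+j by omega)
    rwa [show n+j-j = n by omega] at this
  have h2' : (((n+j).choose j : ℤ) * (Nat.factorial j : ℤ)) * (Nat.factorial n : ℤ)
      = (Nat.factorial (n+j) : ℤ) := by exact_mod_cast congrArg (Nat.cast : ℕ → ℤ) h2
  have hne : (Nat.factorial n : ℤ) ≠ 0 := by positivity
  exact mul_right_cancel₀ hne (h1.trans h2'.symm)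

lemma key_nat (p n : ℕ) (hp : 0 < p) :
    ((n:ℤ)+1)^p = ∑ j ∈ Icc 1 p,
      (-1:ℤ)^(p+j) * stirling2 p j * ((n+j).choose j : ℤ) * (Nat.factorial j : ℤ) := by
  rw [key_poly p ((n:ℤ)+1)]
  rw [← Finset.sum_subset (show Icc 1 p ⊆ range (p+1) by
        intro x hx; simp at hx ⊢; omega)
      (fun x hx hx2 => by
        have hx0 : x = 0 := by simp at hx hx2; omega
        subst hx0
        obtain ⟨p', rfl⟩ := Nat.exists_eq_add_of_lt hp
        simp [stirling2])]
  apply Finset.sum_congr rfl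
  intro j _
  rw [prod_eq_choose n j]
  ring

lemma main_lemma (p : ℕ) (hp : 0 < p) : ∀ q n, (hS p q n : ℤ) = ∑ j ∈ Icc 1 p,
    (-1:ℤ)^(p+j) * (stirling2 p j : ℤ) * ((n+q+j).choose (q+j+1) : ℤ) * (Nat.factorial j : ℤ) := by
  have hzero : ∀ q, (hS p q 0 : ℤ) = 0 := by
    intro q; cases q <;> simp [hS]
  have hrhs0 : ∀ q, ∑ j ∈ Icc 1 p,
      (-1:ℤ)^(p+j) * (stirling2 p j : ℤ) * (((0:ℕ)+q+j).choose (q+j+1) : ℤ) * (Nat.factorial j : ℤ) = 0 := by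
    intro q
    apply Finset.sum_eq_zero
    intro j _
    rw [Nat.choose_eq_zero_of_lt (by omega)]
    simp
  intro q
  induction q with
  | zero =>
    intro n
    induction n with
    | zero => rw [hzero, hrhs0]
    | succ n ih =>
      have hL : (hS p 0 (n+1) : ℤ) = (hS p 0 n : ℤ) + ((n:ℤ)+1)^p := by
        simp only [hS]
        rw [Finset.sum_Icc_succ_top (by omega : 1 ≤ n+1)]
        push_cast; ring
      rw [hL, ih, key_nat p n hp, ← Finset.sum_add_distrib]
      apply Finset.sum_congr rfl
      intro j _
      have hch : (n+1+0+j).choose (0+j+1) = (n+0+j).choose (0+j+1) + (n+j).choose j := by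
        rw [show n+1+0+j = (n+j)+1 by ring, Nat.choose_succ_succ, show n+0+j = n+j by ring,
          show 0+j+1 = j.succ by omega]
        ring
      rw [hch]
      push_cast; ring
  | succ q ihq =>
    intro n
    induction n with
    | zero => rw [hzero, hrhs0]
    | succ n ih =>
      have hL : (hS p (q+1) (n+1) : ℤ) = (hS p (q+1) n : ℤ) + (hS p q (n+1) : ℤ) := by
        simp only [hS]
        rw [Finset.sum_Icc_succ_top (by omega : 1 ≤ n+1)]
        push_cast; ring
      rw [hL, ih, ihq (n+1), ← Finset.sum_add_distrib]
      apply Finset.sum_congr rfl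
      intro j _
      have hch : (n+1+(q+1)+j).choose (q+1+j+1)
          = (n+(q+1)+j).choose (q+1+j+1) + (n+1+q+j).choose (q+j+1) := by
        rw [show n+1+(q+1)+j = (n+q+j+1)+1 by ring, show q+1+j+1 = (q+j+1)+1 by ring,
          Nat.choose_succ_succ, show n+(q+1)+j = n+q+j+1 by ring, show n+1+q+j = n+q+j+1 by ring]
        ring
      rw [hch]
      push_cast; ring

theorem stmt7 (n p q : ℕ) (hn : 0 < n) (hp : 0 < p) :
    (hS p q n : ℤ) = ∑ j ∈ Finset.Icc 1 p,
      (-1:ℤ)^(p+j) * (stirling2 p j : ℤ) * ((n+q+j).choose (q+j+1) : ℤ) * (Nat.factorial j : ℤ) := main_lemma p hp q n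
end

section
/- For all nonnegative integers n, p, q: B_n^{(-p)}(q) = sum_{j=0}^{min(n,p)} (j!)^2 * S(p+1, j+1) * S_{q+1}(n+q+1, j+q+1), where S(a,b) is the Stirling number of the second kind and S_r(a+r, b+r) denotes the r-Stirling number of the second kind. -/
open Finset

lemma st2_zero : ∀ {n k : ℕ}, n < k → stirling2 n k = 0
  | 0, k+1, _ => rfl
  | n+1, k+1, h => by
      rw [stirling2, st2_zero (by omega), st2_zero (by omega)]; ring

lemma rst2_zero (r : ℕ) : ∀ {n k : ℕ}, n < k → rstirling2 r n k = 0
  | 0, k+1, _ => rfl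
  | n+1, k+1, h => by
      rw [rstirling2, rst2_zero r (by omega), rst2_zero r (by omega)]; ring

lemma st_eq_rst : ∀ n k : ℕ, stirling2 n k = rstirling2 0 n k
  | 0, 0 => rfl
  | 0, _+1 => rfl
  | n+1, 0 => by rw [stirling2, rstirling2]; ring
  | n+1, k+1 => by
      rw [stirling2, rstirling2, st_eq_rst n (k+1), st_eq_rst n k]

lemma choose_id1 (m j : ℕ) :
    ((m:ℤ)+1) * ((m+1).choose (j+1)) = ((m:ℤ)+j+2) * (m.choose (j+1)) + ((j:ℤ)+1) * m.choose j := by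
  by_cases h : j ≤ m
  · have h1 := Nat.choose_succ_right_eq m j
    have h1' : (m.choose (j+1) : ℤ) * (j+1) = m.choose j * ((m:ℤ) - j) := by
      have := congrArg (Nat.cast : ℕ → ℤ) h1
      push_cast [Nat.cast_sub h] at this
      linarith
    have h2 : ((m+1).choose (j+1) : ℤ) = m.choose j + m.choose (j+1) := by
      rw [Nat.choose_succ_succ]; push_cast; ring
    rw [h2]; linarith
  · have e1 : m.choose (j+1) = 0 := Nat.choose_eq_zero_of_lt (by omega)
    have e2 : m.choose j = 0 := Nat.choose_eq_zero_of_lt (by omega)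
    have e3 : (m+1).choose (j+1) = 0 := Nat.choose_eq_zero_of_lt (by omega)
    rw [e1, e2, e3]; push_cast; ring

lemma choose_id2 (m i : ℕ) :
    ((m:ℤ) - i) * m.choose i = (m:ℤ) * ((m-1).choose i) := by
  match m with
  | 0 =>
    match i with
    | 0 => simp
    | i+1 => simp [Nat.choose_eq_zero_of_lt (by omega : (0:ℕ) < i+1)]
  | m+1 =>
    by_cases h : i ≤ m+1
    · have h1 := Nat.choose_succ_right_eq (m+1) i
      have h2 := Nat.add_one_mul_choose_eq (m+1-1) i
      have h3 : m + 1 - 1 = m := rfl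
      rw [h3] at h2
      -- h2 : (m+1) * m.choose i = (m+1).choose (i+1) * (i+1)
      -- h1 : (m+1).choose (i+1) * (i+1) = (m+1).choose i * (m+1-i)
      have : (m+1) * Nat.choose m i = (m+1).choose i * (m+1-i) := by omega
      have hc := congrArg (Nat.cast : ℕ → ℤ) this
      push_cast [Nat.cast_sub h] at hc
      have h4 : (m:ℕ) + 1 - 1 = m := rfl
      rw [h4]
      push_cast
      linarith
    · have e1 : (m+1).choose i = 0 := Nat.choose_eq_zero_of_lt (by omega)
      have e2 : (m+1-1).choose i = 0 := Nat.choose_eq_zero_of_lt (by omega)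
      rw [e1, e2]; push_cast; ring

lemma neg_one_sq_pow (i : ℕ) : ((-1:ℤ))^i * (-1)^i = 1 := by
  rw [← pow_add]
  have : i + i = 2 * i := by ring
  rw [this, pow_mul]; norm_num

lemma rst_formula (r : ℕ) : ∀ n j : ℕ, (j.factorial : ℤ) * rstirling2 r n j =
    ∑ i ∈ range (j+1), (-1)^j * (-1)^i * (j.choose i) * ((i:ℤ)+r)^n
  | 0, j => by
    match j with
    | 0 => simp [rstirling2]
    | j+1 =>
      rw [rstirling2]
      simp only [pow_zero, mul_one, Nat.cast_zero, mul_zero]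
      have := @Int.alternating_sum_range_choose (j+1)
      rw [if_neg (by omega)] at this
      calc (0:ℤ) = (-1)^(j+1) * ∑ i ∈ range (j+1+1), (-1)^i * ((j+1).choose i : ℤ) := by
            rw [this]; ring
        _ = _ := by rw [mul_sum]; apply sum_congr rfl; intro i _; ring
  | n+1, 0 => by
    have ih := rst_formula r n 0
    simp only [sum_range_one, Nat.choose_self, Nat.cast_one, Nat.cast_zero, pow_zero,
      Nat.factorial_zero, one_mul, mul_one, zero_add] at ih ⊢
    rw [rstirling2]
    push_cast
    rw [ih]; ring
  | n+1, j+1 => by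
    have ih1 := rst_formula r n (j+1)
    have ih2 := rst_formula r n j
    rw [rstirling2]
    have key : ((j+1).factorial : ℤ) * (((j+1+r) * rstirling2 r n (j+1) + rstirling2 r n j : ℕ) : ℤ)
        = ((j:ℤ)+1+r) * ((j+1).factorial * rstirling2 r n (j+1))
          + ((j:ℤ)+1) * (j.factorial * rstirling2 r n j) := by
      rw [Nat.factorial_succ]; push_cast; ring
    rw [key, ih1, ih2, mul_sum, mul_sum]
    -- extend second sum to range (j+2)
    have ext : ∑ i ∈ range (j+1), ((j:ℤ)+1) * ((-1)^j * (-1)^i * (j.choose i) * ((i:ℤ)+r)^n)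
        = ∑ i ∈ range (j+2), ((j:ℤ)+1) * ((-1)^j * (-1)^i * (j.choose i) * ((i:ℤ)+r)^n) := by
      rw [sum_range_succ (fun i => ((j:ℤ)+1) * ((-1)^j * (-1)^i * (j.choose i) * ((i:ℤ)+r)^n)) (j+1)]
      rw [Nat.choose_eq_zero_of_lt (by omega : j < j+1)]
      push_cast; ring
    rw [ext, ← sum_add_distrib]
    apply sum_congr rfl
    intro i hi
    simp only [mem_range] at hi
    have hc := choose_id2 (j+1) i
    have h1 : ((j:ℕ)+1-1) = j := rfl
    rw [h1] at hc
    push_cast at hc ⊢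
    have expand : ((i:ℤ)+r)^(n+1) = ((i:ℤ)+r)^n * (((j:ℤ)+1+r) - ((j:ℤ)+1-i)) := by ring
    rw [expand]
    -- hc : ((j:ℤ)+1 - i) * (j+1).choose i = ((j:ℤ)+1) * j.choose i
    linear_combination -((-1:ℤ)^j * (-1)^i * (((i:ℤ)+(r:ℤ))^n)) * hc

def gfun (q n m : ℕ) : ℤ := ∑ i ∈ range (m+1), (-1)^i * (m.choose i) * ((q:ℤ) - i)^n

lemma g_succ (q n m : ℕ) :
    gfun q (n+1) m = ((q:ℤ) - m) * gfun q n m + m * gfun q n (m-1) := by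
  match m with
  | 0 => simp [gfun]; ring
  | m+1 =>
    have h1 : (m+1) - 1 = m := rfl
    rw [h1]
    unfold gfun
    have step : ∀ i : ℕ, ((-1:ℤ))^i * ((m+1).choose i) * ((q:ℤ)-i)^(n+1)
        = ((q:ℤ)-(m+1)) * ((-1)^i * ((m+1).choose i) * ((q:ℤ)-i)^n)
          + ((m:ℤ)+1) * ((-1)^i * (m.choose i) * ((q:ℤ)-i)^n) := by
      intro i
      have hc := choose_id2 (m+1) i
      rw [h1] at hc
      push_cast at hc
      linear_combination ((-1:ℤ)^i * ((q:ℤ)-i)^n) * hc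
    rw [sum_congr rfl (fun i _ => step i), sum_add_distrib, ← mul_sum, ← mul_sum]
    have last : ∑ i ∈ range (m+1+1), (-1:ℤ)^i * (m.choose i) * ((q:ℤ)-i)^n
        = ∑ i ∈ range (m+1), (-1:ℤ)^i * (m.choose i) * ((q:ℤ)-i)^n := by
      rw [sum_range_succ, Nat.choose_eq_zero_of_lt (by omega : m < m+1)]
      push_cast; ring
    rw [last]
    push_cast; ring

lemma g_vanish (q : ℕ) : ∀ n m : ℕ, n < m → gfun q n m = 0
  | 0, m+1, _ => by
      have h := @Int.alternating_sum_range_choose (m+1)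
      rw [if_neg (by omega)] at h
      simpa [gfun] using h
  | n+1, m+1, h => by
      rw [g_succ, g_vanish q n (m+1) (by omega), g_vanish q n ((m+1)-1) (by omega)]
      ring

lemma lemD (q : ℕ) : ∀ n j : ℕ, ∑ m ∈ range (n+1), (m.choose j : ℤ) * gfun q n m
    = (j.factorial : ℤ) * rstirling2 (q+1) n j
  | 0, 0 => by simp [gfun, rstirling2]
  | 0, j+1 => by
      simp [gfun, rstirling2, Nat.choose_eq_zero_of_lt (by omega : (0:ℕ) < j+1)]
  | n+1, j => by
      have e1 : ∑ m ∈ range (n+2), (m.choose j : ℤ) * gfun q (n+1) m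
          = ∑ m ∈ range (n+2), ((m.choose j : ℤ) * (((q:ℤ)-m) * gfun q n m)
              + (m.choose j : ℤ) * ((m:ℤ) * gfun q n (m-1))) := by
        apply sum_congr rfl; intro m _; rw [g_succ]; ring
      have e2 : ∑ m ∈ range (n+2), (m.choose j : ℤ) * (((q:ℤ)-m) * gfun q n m)
          = ∑ m ∈ range (n+1), (m.choose j : ℤ) * (((q:ℤ)-m) * gfun q n m) := by
        rw [sum_range_succ, g_vanish q n (n+1) (by omega)]; ring
      have e3 : ∑ m ∈ range (n+2), (m.choose j : ℤ) * ((m:ℤ) * gfun q n (m-1))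
          = ∑ m ∈ range (n+1), ((m+1).choose j : ℤ) * (((m:ℤ)+1) * gfun q n m) := by
        rw [sum_range_succ' (fun m => (m.choose j : ℤ) * ((m:ℤ) * gfun q n (m-1))) (n+1)]
        simp
      rw [e1, sum_add_distrib, e2, e3, ← sum_add_distrib]
      match j with
      | 0 =>
        have ih := lemD q n 0
        simp only [Nat.factorial_zero, Nat.cast_one, one_mul] at ih ⊢
        rw [rstirling2]
        push_cast
        rw [← ih, mul_sum]
        apply sum_congr rfl; intro m _
        simp only [Nat.choose_zero_right, Nat.cast_one]
        ring
      | j+1 =>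
        have ihA := lemD q n (j+1)
        have ihB := lemD q n j
        have key : (((j+1).factorial : ℤ)) * rstirling2 (q+1) (n+1) (j+1)
            = ((j:ℤ)+q+2) * (((j+1).factorial:ℤ) * rstirling2 (q+1) n (j+1))
              + ((j:ℤ)+1) * ((j.factorial:ℤ) * rstirling2 (q+1) n j) := by
          rw [rstirling2, Nat.factorial_succ]; push_cast; ring
        rw [key, ← ihA, ← ihB, mul_sum, mul_sum, ← sum_add_distrib]
        apply sum_congr rfl
        intro m _
        have hc := choose_id1 m j
        linear_combination (gfun q n m) * hc

lemma b0 : ∀ p m : ℕ, m^p = ∑ k ∈ range (p+1), stirling2 p k * m.descFactorial k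
  | 0, m => by simp [stirling2]
  | p+1, m => by
    have desc : ∀ k, m * m.descFactorial k = m.descFactorial (k+1) + k * m.descFactorial k := by
      intro k
      by_cases h : k ≤ m
      · rw [Nat.descFactorial_succ]
        have h2 : (m - k) * m.descFactorial k + k * m.descFactorial k = m * m.descFactorial k := by
          rw [← Nat.add_mul]; congr 1; omega
        omega
      · rw [Nat.descFactorial_succ, Nat.descFactorial_eq_zero_iff_lt.2 (by omega)]
        simp
    have second : ∑ k ∈ range (p+1), k * stirling2 p k * m.descFactorial k
        = ∑ k ∈ range (p+1), (k+1) * stirling2 p (k+1) * m.descFactorial (k+1) := by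
      rw [sum_range_succ' (fun k => k * stirling2 p k * m.descFactorial k) p]
      rw [sum_range_succ (fun k => (k+1) * stirling2 p (k+1) * m.descFactorial (k+1)) p]
      rw [st2_zero (show p < p+1 by omega)]
      simp
    calc m^(p+1) = m * m^p := by ring
      _ = ∑ k ∈ range (p+1), stirling2 p k * (m * m.descFactorial k) := by
          rw [b0 p m, mul_sum]; apply sum_congr rfl; intro k _; ring
      _ = ∑ k ∈ range (p+1), (stirling2 p k * m.descFactorial (k+1)
            + k * stirling2 p k * m.descFactorial k) := by
          apply sum_congr rfl; intro k _; rw [desc k]; ring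
      _ = ∑ k ∈ range (p+1), stirling2 p k * m.descFactorial (k+1)
            + ∑ k ∈ range (p+1), k * stirling2 p k * m.descFactorial k := sum_add_distrib
      _ = ∑ k ∈ range (p+1), stirling2 (p+1) (k+1) * m.descFactorial (k+1) := by
          rw [second, ← sum_add_distrib]
          apply sum_congr rfl; intro k _
          rw [stirling2]; ring
      _ = ∑ k ∈ range (p+2), stirling2 (p+1) k * m.descFactorial k := by
          rw [sum_range_succ' (fun k => stirling2 (p+1) k * m.descFactorial k) (p+1)]
          have h0 : stirling2 (p+1) 0 = 0 := rfl
          rw [h0]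
          simp

lemma lemB (p m : ℕ) : (m+1)^p = ∑ j ∈ range (p+1), stirling2 (p+1) (j+1) * m.descFactorial j := by
  have h := b0 (p+1) (m+1)
  rw [sum_range_succ' (fun k => stirling2 (p+1) k * (m+1).descFactorial k) (p+1)] at h
  simp only [Nat.succ_descFactorial_succ] at h
  have h0 : stirling2 (p+1) 0 * (m+1).descFactorial 0 = 0 := rfl
  rw [h0, add_zero] at h
  have h2 : (m+1) * (m+1)^p = (m+1) * ∑ j ∈ range (p+1), stirling2 (p+1) (j+1) * m.descFactorial j := by
    rw [← pow_succ', h, mul_sum]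
    apply sum_congr rfl; intro k _; ring
  exact Nat.eq_of_mul_eq_mul_left (by omega) h2

lemma lemE (jj m : ℕ) : ((-1:ℤ))^m * ((m.factorial:ℤ) * (stirling2 jj m : ℤ))
    = ∑ i ∈ range (m+1), (-1:ℤ)^i * (m.choose i) * (i:ℤ)^jj := by
  rw [st_eq_rst, rst_formula 0 jj m, mul_sum]
  apply sum_congr rfl; intro i _
  push_cast
  linear_combination ((-1:ℤ)^i * (m.choose i) * (i:ℤ)^jj) * (neg_one_sq_pow m)

lemma binom_neg (i q n : ℕ) :
    ∑ j ∈ range (n+1), (n.choose j : ℤ) * (-1)^j * (i:ℤ)^j * (q:ℤ)^(n-j) = ((q:ℤ) - (i:ℤ))^n := by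
  have h : (q:ℤ) - i = -(i:ℤ) + q := by ring
  rw [h, add_pow]
  apply sum_congr rfl; intro j _
  rw [neg_pow]
  ring

lemma lemA (p n q : ℕ) : polyBP p n q = ∑ m ∈ range (n+1), ((m:ℤ)+1)^p * gfun q n m := by
  have expand : polyBP p n q = ∑ j ∈ range (n+1), ∑ m ∈ range (n+1),
      (n.choose j : ℤ) * (-1)^j * (stirling2 j m : ℤ) * (-1)^m * (m.factorial:ℤ)
        * ((m:ℤ)+1)^p * (q:ℤ)^(n-j) := by
    unfold polyBP polyBN
    apply sum_congr rfl
    intro j hj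
    simp only [mem_range] at hj
    have hsub : range (j+1) ⊆ range (n+1) := by
      intro x hx; simp only [mem_range] at *; omega
    rw [sum_subset hsub (fun x hx hnx => by
      simp only [mem_range] at hx hnx
      rw [st2_zero (show j < x by omega)]
      push_cast; ring)]
    simp only [mul_sum, sum_mul]
    apply sum_congr rfl; intro m _; ring
  rw [expand, sum_comm]
  apply sum_congr rfl
  intro m _
  calc ∑ j ∈ range (n+1), (n.choose j:ℤ) * (-1)^j * (stirling2 j m:ℤ) * (-1)^m
          * (m.factorial:ℤ) * ((m:ℤ)+1)^p * (q:ℤ)^(n-j)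
      = ∑ j ∈ range (n+1), ((m:ℤ)+1)^p * ((n.choose j:ℤ) * (-1)^j * (q:ℤ)^(n-j)
          * ((-1:ℤ)^m * ((m.factorial:ℤ) * (stirling2 j m:ℤ)))) := by
        apply sum_congr rfl; intro j _; ring
    _ = ∑ j ∈ range (n+1), ((m:ℤ)+1)^p * ((n.choose j:ℤ) * (-1)^j * (q:ℤ)^(n-j)
          * (∑ i ∈ range (m+1), (-1:ℤ)^i * (m.choose i) * (i:ℤ)^j)) := by
        apply sum_congr rfl; intro j _; rw [lemE j m]
    _ = ((m:ℤ)+1)^p * ∑ i ∈ range (m+1), (-1:ℤ)^i * (m.choose i) *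
          (∑ j ∈ range (n+1), (n.choose j:ℤ) * (-1)^j * (i:ℤ)^j * (q:ℤ)^(n-j)) := by
        simp only [mul_sum]
        rw [sum_comm]
        apply sum_congr rfl; intro i _
        apply sum_congr rfl; intro j _
        ring
    _ = ((m:ℤ)+1)^p * ∑ i ∈ range (m+1), (-1:ℤ)^i * (m.choose i) * ((q:ℤ) - (i:ℤ))^n := by
        congr 1
        apply sum_congr rfl; intro i _
        rw [binom_neg]
    _ = ((m:ℤ)+1)^p * gfun q n m := rfl

theorem stmt12 (n p q : ℕ) :
    polyBP p n q = ∑ j ∈ Finset.range (min n p + 1),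
      ((Nat.factorial j : ℤ))^2 * (stirling2 (p+1) (j+1) : ℤ) * (rstirling2 (q+1) n j : ℤ) := by
  rw [lemA]
  have e1 : ∀ m : ℕ, ((m:ℤ)+1)^p
      = ∑ j ∈ range (p+1), (stirling2 (p+1) (j+1) : ℤ) * (m.descFactorial j : ℤ) := by
    intro m
    have h := congrArg (Nat.cast : ℕ → ℤ) (lemB p m)
    push_cast at h
    exact h
  have hsub : range (min n p + 1) ⊆ range (p+1) := by
    intro x hx; simp only [mem_range] at *; omega
  calc ∑ m ∈ range (n+1), ((m:ℤ)+1)^p * gfun q n m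
      = ∑ m ∈ range (n+1), ∑ j ∈ range (p+1),
          (stirling2 (p+1) (j+1):ℤ) * (m.descFactorial j:ℤ) * gfun q n m := by
        apply sum_congr rfl; intro m _
        rw [e1 m, sum_mul]
    _ = ∑ j ∈ range (p+1), (stirling2 (p+1) (j+1):ℤ) * (j.factorial:ℤ)
          * ((j.factorial:ℤ) * rstirling2 (q+1) n j) := by
        rw [sum_comm]
        apply sum_congr rfl; intro j _
        rw [← lemD q n j, mul_sum]
        apply sum_congr rfl; intro m _
        rw [Nat.descFactorial_eq_factorial_mul_choose]
        push_cast; ring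
    _ = ∑ j ∈ range (p+1),
          ((Nat.factorial j : ℤ))^2 * (stirling2 (p+1) (j+1) : ℤ) * (rstirling2 (q+1) n j : ℤ) := by
        apply sum_congr rfl; intro j _; ring
    _ = ∑ j ∈ range (min n p + 1),
          ((Nat.factorial j : ℤ))^2 * (stirling2 (p+1) (j+1) : ℤ) * (rstirling2 (q+1) n j : ℤ) := by
        symm
        apply sum_subset hsub
        intro x hx hnx
        simp only [mem_range] at hx hnx
        rw [rst2_zero (q+1) (show n < x by omega)]
        simp
end

section
/- Let q be a prime and n an integer with 1 ≤ n ≤ q-1. Then q * (h_n^{(q+1)} + n * h_q^{(n+1)}) ≡ n (mod q), where congruence of rationals a/b ≡ c/d (mod q) means q divides ad - bc, and h denotes hyperharmonic numbers. -/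
open Finset

lemma harmonic'_succ (m : ℕ) : harmonic' (m+1) = harmonic' m + 1/(m+1 : ℚ) :=
  Finset.sum_range_succ _ _

lemma harmonic'_eq_Icc (m : ℕ) : harmonic' m = ∑ k ∈ Finset.Icc 1 m, 1/(k:ℚ) := by
  induction m with
  | zero => simp [harmonic']
  | succ m ih =>
    rw [harmonic'_succ, ih, Finset.sum_Icc_succ_top (by omega)]
    push_cast; ring

lemma hyperh_succ_succ (r n : ℕ) :
    hyperh (r+1) (n+1) = hyperh (r+1) n + hyperh r (n+1) := by
  show ∑ k ∈ Finset.Icc 1 (n+1), hyperh r k = _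
  rw [Finset.sum_Icc_succ_top (by omega)]
  rfl

lemma hyperh_zero (r : ℕ) : hyperh (r+1) 0 = 0 := by
  show ∑ k ∈ Finset.Icc 1 0, hyperh r k = 0
  simp

lemma hyperh_one (n : ℕ) : hyperh 1 n = harmonic' n := by
  induction n with
  | zero => simp [hyperh_zero, harmonic']
  | succ n ih =>
    rw [hyperh_succ_succ, ih, harmonic'_succ]
    show _ + (if n+1 = 0 then 0 else 1/((n+1:ℕ):ℚ)) = _
    simp

lemma hyperh_closed (r n : ℕ) :
    hyperh (r+1) n = ((n+r).choose r : ℚ) * (harmonic' (n+r) - harmonic' r) := by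
  induction r generalizing n with
  | zero => simp [hyperh_one, harmonic']
  | succ r ih =>
    induction n with
    | zero => simp [hyperh_zero]
    | succ n ihn =>
      rw [hyperh_succ_succ, ihn, ih (n+1)]
      simp only [show n+1+r = n+r+1 by omega, show n+1+(r+1) = n+r+2 by omega,
        show n+(r+1) = n+r+1 by omega]
      have p1 : ((n+r+2).choose (r+1) : ℚ) =
          ((n+r+1).choose r : ℚ) + ((n+r+1).choose (r+1) : ℚ) := by
        exact_mod_cast congrArg (Nat.cast (R := ℚ)) (Nat.choose_succ_succ (n+r+1) r)
      have p2 : ((n+r+2 : ℕ) : ℚ) * ((n+r+1).choose r : ℚ) =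
          ((n+r+2).choose (r+1) : ℚ) * ((r+1 : ℕ) : ℚ) := by
        exact_mod_cast congrArg (Nat.cast (R := ℚ)) (Nat.add_one_mul_choose_eq (n+r+1) r)
      rw [harmonic'_succ (n+r+1), harmonic'_succ r]
      push_cast [Nat.cast_add] at p1 p2 ⊢
      have hx : ((r:ℚ)+1) * (1/((r:ℚ)+1)) = 1 := by
        rw [mul_one_div, div_self]; positivity
      have hy : ((n:ℚ)+(r:ℚ)+2) * (1/((n:ℚ)+(r:ℚ)+2)) = 1 := by
        rw [mul_one_div, div_self]; positivity
      linear_combination (1/((r:ℚ)+1) - (harmonic' (n+r+1) - harmonic' r)) * p1 +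
        ((1/((r:ℚ)+1))*(1/((n:ℚ)+(r:ℚ)+2))) * p2 -
        (((n+r+1).choose r : ℚ) * (1/((r:ℚ)+1))) * hy +
        (((n+r+2).choose (r+1) : ℚ) * (1/((n:ℚ)+(r:ℚ)+2))) * hx

lemma harmonic'_split (m : ℕ) (hm : 1 ≤ m) :
    harmonic' m = harmonic' (m-1) + 1/(m:ℚ) := by
  obtain ⟨m', rfl⟩ : ∃ m', m = m'+1 := ⟨m-1, by omega⟩
  simp [harmonic'_succ]

lemma sumdiv (b : ℕ) (T : Finset ℕ) (hT : ∀ k ∈ T, k ∣ b ∧ k ≠ 0) :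
    (b:ℚ) * (∑ k ∈ T, 1/(k:ℚ)) = ((∑ k ∈ T, b / k : ℕ) : ℚ) := by
  push_cast
  rw [Finset.mul_sum]
  refine Finset.sum_congr rfl fun k hk => ?_
  rw [mul_one_div, Nat.cast_div (hT k hk).1
    (Nat.cast_ne_zero.mpr (hT k hk).2)]

lemma ratMod_of_eq (q : ℕ) (hq : q.Prime) (x : ℚ) (y b : ℕ) (a : ℤ)
    (hb : ¬ q ∣ b) (h : x * (b:ℚ) = (y:ℚ) * b + (q:ℚ) * a) :
    ratMod q x (y:ℚ) := by
  have hden : (x.den:ℚ) ≠ 0 := by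
    exact_mod_cast x.den_nz
  have hxnum : (x.num : ℚ) = x * x.den :=
    (div_eq_iff hden).mp (Rat.num_div_den x)
  have key : (x.num : ℚ) * b = ((y:ℚ) * b + (q:ℚ) * a) * x.den := by
    rw [hxnum, ← h]; ring
  have hZ : x.num * (b:ℤ) = ((y:ℤ) * b + (q:ℤ) * a) * x.den := by
    exact_mod_cast key
  have hdvd : (q:ℤ) ∣ (b:ℤ) * (x.num - (y:ℤ) * x.den) :=
    ⟨a * x.den, by linear_combination hZ⟩
  have hqp : Prime (q:ℤ) := Nat.prime_iff_prime_int.mp hq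
  have hbZ : ¬ (q:ℤ) ∣ (b:ℤ) := by exact_mod_cast hb
  have : (q:ℤ) ∣ (x.num - (y:ℤ) * x.den) :=
    (hqp.dvd_mul.mp hdvd).resolve_left hbZ
  show (q:ℤ) ∣ x.num * (((y:ℕ):ℚ).den:ℤ) - ((y:ℕ):ℚ).num * x.den
  simpa using this

lemma choose_one_add (q n : ℕ) (hq : q.Prime) (hn : n < q) :
    ∃ c : ℕ, (q+n).choose n = 1 + q * c := by
  rw [Nat.add_choose_eq]
  have h0 : ((0,n) : ℕ × ℕ) ∈ Finset.HasAntidiagonal.antidiagonal n := by simp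
  rw [← Finset.add_sum_erase _ _ h0]
  have hdvd : q ∣ ∑ ij ∈ (Finset.HasAntidiagonal.antidiagonal n).erase (0,n),
      q.choose ij.1 * n.choose ij.2 := by
    refine Finset.dvd_sum fun ij hij => ?_
    obtain ⟨hne, hmem⟩ := Finset.mem_erase.mp hij
    rw [Finset.HasAntidiagonal.mem_antidiagonal] at hmem
    have h1 : ij.1 ≠ 0 := by
      intro h
      apply hne
      have : ij.2 = n := by omega
      exact Prod.ext h this
    have h2 : ij.1 < q := by omega
    exact Dvd.dvd.mul_right (hq.dvd_choose_self h1 h2) _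
  obtain ⟨c, hc⟩ := hdvd
  exact ⟨c, by rw [hc]; simp⟩

theorem stmt16 (q n : ℕ) (hq : q.Prime) (hn1 : 1 ≤ n) (hn2 : n ≤ q - 1) :
    ratMod q ((q:ℚ) * (hyperh (q+1) n + (n:ℚ) * hyperh (n+1) q)) (n:ℚ) := by
  have hq2 : 2 ≤ q := hq.two_le
  have hnq : n < q := by omega
  set S : Finset ℕ := (Finset.Icc 1 (n+q)).erase q with hS
  set b : ℕ := ∏ k ∈ S, k with hb
  -- membership facts
  have hqmem : q ∈ Finset.Icc 1 (n+q) := by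
    rw [Finset.mem_Icc]; omega
  have hmemS : ∀ k, 1 ≤ k → k ≤ n + q → k ≠ q → k ∈ S := by
    intro k h1 h2 h3
    rw [hS, Finset.mem_erase, Finset.mem_Icc]
    exact ⟨h3, h1, h2⟩
  have hdvdb : ∀ k ∈ S, k ∣ b ∧ k ≠ 0 := by
    intro k hk
    refine ⟨Finset.dvd_prod_of_mem _ hk, ?_⟩
    have := Finset.mem_Icc.mp (Finset.mem_of_mem_erase hk)
    omega
  -- q does not divide b
  have hqb : ¬ q ∣ b := by
    intro hdvd
    rw [hb] at hdvd
    obtain ⟨k, hk, hqk⟩ := (Nat.Prime.prime hq).dvd_finset_prod_iff _ |>.mp hdvd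
    obtain ⟨hkne, hkmem⟩ := Finset.mem_erase.mp hk
    rw [Finset.mem_Icc] at hkmem
    obtain ⟨m, rfl⟩ := hqk
    match m with
    | 0 => omega
    | 1 => omega
    | (m+2) =>
      have : q*(m+2) = q*m + 2*q := by ring
      omega
  -- the integer sums
  set A : ℕ := ∑ k ∈ S, b / k with hA
  set B : ℕ := ∑ k ∈ Finset.Icc 1 (q-1), b / k with hB
  set E : ℕ := ∑ k ∈ Finset.Icc 1 n, b / k with hE
  obtain ⟨c, hc⟩ := choose_one_add q n hq hnq
  set C : ℕ := (n+q).choose q with hC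
  have hCc : C = 1 + q * c := by
    rw [hC, ← Nat.choose_symm_add, Nat.add_comm n q, hc]
  -- key rational identities
  have hq0 : (q:ℚ) ≠ 0 := by positivity
  have fA : (b:ℚ) * harmonic' (n+q) = (b:ℚ)/q + (A:ℚ) := by
    rw [harmonic'_eq_Icc, ← Finset.add_sum_erase _ _ hqmem, mul_add,
      mul_one_div, ← hS, sumdiv b S hdvdb, ← hA]
  have fB : (b:ℚ) * harmonic' q = (b:ℚ)/q + (B:ℚ) := by
    rw [harmonic'_split q (by omega), mul_add, mul_one_div, harmonic'_eq_Icc,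
      sumdiv b _ (fun k hk => hdvdb k (by
        have := Finset.mem_Icc.mp hk
        exact hmemS k this.1 (by omega) (by omega))), ← hB]
    ring
  have fE : (b:ℚ) * harmonic' n = (E:ℚ) := by
    rw [harmonic'_eq_Icc,
      sumdiv b _ (fun k hk => hdvdb k (by
        have := Finset.mem_Icc.mp hk
        exact hmemS k this.1 (by omega) (by omega))), ← hE]
  have hw : (q:ℚ) * ((b:ℚ)/(q:ℚ)) = (b:ℚ) := by field_simp
  -- main equation
  set X : ℚ := (q:ℚ) * (hyperh (q+1) n + (n:ℚ) * hyperh (n+1) q) with hX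
  have heq : X * (b:ℚ) = (n:ℚ) * b + (q:ℚ) *
      ((c:ℤ)*n*b + (C:ℤ)*((n+1)*A - B - n*E) : ℤ) := by
    rw [hX, hyperh_closed q n, hyperh_closed n q,
      show q + n = n + q by omega, ← hC]
    have hCC : ((q+n).choose n : ℚ) = (C:ℚ) := by
      rw [hC, Nat.add_comm q n, Nat.choose_symm_add]
    rw [show q + n = n + q by omega] at hCC
    rw [hCC]
    have fC : (C:ℚ) = 1 + (q:ℚ)*(c:ℚ) := by exact_mod_cast hCc
    push_cast
    linear_combination ((q:ℚ)*(C:ℚ)*(1+(n:ℚ)))*fA - ((q:ℚ)*(C:ℚ))*fB -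
      ((q:ℚ)*(C:ℚ)*(n:ℚ))*fE + ((C:ℚ)*(n:ℚ))*hw + ((n:ℚ)*(b:ℚ))*fC
  exact ratMod_of_eq q hq X n b _ hqb heq
end

section
/- For a prime number p and all positive integers n, nonnegative integers q: S_p^{(q)}(n) ≡ binomial(n+q+1, q+2) (mod p), where S_p^{(q)}(n) is the hyper-sum of p-th powers. -/
open Finset

lemma hockey (r : ℕ) : ∀ n, ∑ k ∈ Finset.Icc 1 n, (k+r).choose (r+1) = (n+r+1).choose (r+2) := by
  intro n
  induction n with
  | zero => simp [Nat.choose_eq_zero_of_lt]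
  | succ n ih =>
      rw [Finset.sum_Icc_succ_top (by omega), ih]
      have : n+1+r+1 = (n+r+1)+1 := by ring
      rw [this, Nat.choose_succ_succ' (n+r+1) (r+1)]
      simp only [show r+1+1 = r+2 from rfl, show n+1+r = n+r+1 from by ring]
      omega

lemma hS1_eq : ∀ q n, hS 1 q n = (n+q+1).choose (q+2) := by
  intro q
  induction q with
  | zero =>
      intro n
      show ∑ k ∈ Finset.Icc 1 n, k^1 = _
      have := hockey 0 n
      simpa using this
  | succ q ih =>
      intro n
      show ∑ k ∈ Finset.Icc 1 n, hS 1 q k = _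
      calc ∑ k ∈ Finset.Icc 1 n, hS 1 q k
          = ∑ k ∈ Finset.Icc 1 n, (k+(q+1)).choose (q+2) := by
            refine Finset.sum_congr rfl fun k _ => ?_
            rw [ih k, show k+q+1 = k+(q+1) from by ring]
        _ = (n+q+2).choose (q+3) := by
            have := hockey (q+1) n
            rw [this]
            simp only [show n+(q+1)+1 = n+q+2 from by ring]
        _ = _ := by simp only [show n+(q+1)+1 = n+q+2 from by ring]

lemma cast_hS (p : ℕ) (hp : p.Prime) : ∀ q n, ((hS p q n : ZMod p)) = (hS 1 q n : ZMod p) := by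
  haveI : Fact p.Prime := ⟨hp⟩
  intro q
  induction q with
  | zero =>
      intro n
      show ((∑ k ∈ Finset.Icc 1 n, k^p : ℕ) : ZMod p) = ((∑ k ∈ Finset.Icc 1 n, k^1 : ℕ) : ZMod p)
      push_cast
      refine Finset.sum_congr rfl fun k _ => ?_
      rw [ZMod.pow_card, pow_one]
  | succ q ih =>
      intro n
      show ((∑ k ∈ Finset.Icc 1 n, hS p q k : ℕ) : ZMod p) = ((∑ k ∈ Finset.Icc 1 n, hS 1 q k : ℕ) : ZMod p)
      push_cast
      exact Finset.sum_congr rfl fun k _ => ih k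

theorem stmt17 (p n q : ℕ) (hp : p.Prime) (hn : 0 < n) :
    hS p q n ≡ (n+q+1).choose (q+2) [MOD p] := by
  have h := cast_hS p hp q n
  rw [hS1_eq] at h
  exact (ZMod.natCast_eq_natCast_iff _ _ _).mp h
end
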